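/- For every r ≥ 2, RKG_r(3,3) ≥ 3r + 2; that is, there exists a red/blue edge-coloring of the Kneser graph KG(3r+1, r) with no monochromatic triangle. -/

import Mathlib

open Finset

/-- A clique in the Kneser graph `KG(n,r)`: a family of pairwise disjoint
`r`-element subsets of `[n] = {0, …, n-1}`. -/
def IsKneserClique (n r : ℕ) (S : Finset (Finset ℕ)) : Prop :=
  (∀ A ∈ S, A ⊆ Finset.range n ∧ A.card = r) ∧
  (S : Set (Finset ℕ)).Pairwise Disjoint

/-- A clique all of whose edges get color `b` under the edge-coloring `c`. -/
def MonoClique (c : Finset ℕ → Finset ℕ → Bool) (b : Bool) (S : Finset (Finset ℕ)) : Prop :=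
  ∀ A ∈ S, ∀ B ∈ S, A ≠ B → c A B = b

/-- `n` is Ramsey for the Kneser graph `KG(n,r)`: every red/blue edge-coloring
contains a red `s`-clique or a blue `t`-clique. -/
def KneserRamseyProp (n r s t : ℕ) : Prop :=
  ∀ c : Finset ℕ → Finset ℕ → Bool, (∀ A B, c A B = c B A) →
    (∃ S : Finset (Finset ℕ), IsKneserClique n r S ∧ S.card = s ∧ MonoClique c true S) ∨
    (∃ S : Finset (Finset ℕ), IsKneserClique n r S ∧ S.card = t ∧ MonoClique c false S)

/-- The `r`-Kneser Ramsey number `RKG_r(s,t)`. -/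
noncomputable def RKG (r s t : ℕ) : ℕ := sInf {n | KneserRamseyProp n r s t}

/-- `n` is Ramsey for `(s,t)`: every red/blue edge-coloring of the complete
graph on `[n]` contains a red `K_s` or a blue `K_t`. -/
def RamseyProp (n s t : ℕ) : Prop :=
  ∀ c : ℕ → ℕ → Bool, (∀ u v, c u v = c v u) →
    (∃ S : Finset ℕ, S ⊆ Finset.range n ∧ S.card = s ∧
      ∀ u ∈ S, ∀ v ∈ S, u ≠ v → c u v = true) ∨
    (∃ S : Finset ℕ, S ⊆ Finset.range n ∧ S.card = t ∧
      ∀ u ∈ S, ∀ v ∈ S, u ≠ v → c u v = false)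

/-- The classical Ramsey number `R(s,t)`. -/
noncomputable def ramseyNumber (s t : ℕ) : ℕ := sInf {n | RamseyProp n s t}

/-- The blue predicate: both sets inside `range (3r-1)` (the `Z` part), or an
`X`–`Y` pair (one contains `3r`, the other contains `3r-1` but not `3r`). -/
def bluP (r : ℕ) (A B : Finset ℕ) : Prop :=
  (A ⊆ Finset.range (3*r-1) ∧ B ⊆ Finset.range (3*r-1)) ∨
  (3*r ∈ A ∧ 3*r-1 ∈ B ∧ 3*r ∉ B) ∨
  (3*r ∈ B ∧ 3*r-1 ∈ A ∧ 3*r ∉ A)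

instance bluP.dec (r : ℕ) (A B : Finset ℕ) : Decidable (bluP r A B) := by
  unfold bluP; infer_instance

/-- The coloring: `true` (red) unless the pair is blue. -/
def kcol (r : ℕ) (A B : Finset ℕ) : Bool := !decide (bluP r A B)

lemma kcol_symm (r : ℕ) : ∀ A B, kcol r A B = kcol r B A := by
  intro A B
  unfold kcol
  congr 1
  rw [decide_eq_decide]
  unfold bluP; tauto

lemma kcol_true (r : ℕ) (A B : Finset ℕ) : kcol r A B = true ↔ ¬ bluP r A B := by
  simp [kcol]

lemma kcol_false (r : ℕ) (A B : Finset ℕ) : kcol r A B = false ↔ bluP r A B := by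
  simp [kcol]

lemma card_contra (r : ℕ) (hr : 2 ≤ r) (A B C : Finset ℕ)
    (hA : A.card = r) (hB : B.card = r) (hC : C.card = r)
    (dAB : Disjoint A B) (dAC : Disjoint A C) (dBC : Disjoint B C)
    (h1 : A ⊆ Finset.range (3*r-1)) (h2 : B ⊆ Finset.range (3*r-1))
    (h3 : C ⊆ Finset.range (3*r-1)) : False := by
  have hcard : (A ∪ B ∪ C).card = 3*r := by
    rw [Finset.card_union_of_disjoint (Finset.disjoint_union_left.mpr ⟨dAC, dBC⟩),
      Finset.card_union_of_disjoint dAB]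
    omega
  have hsub : A ∪ B ∪ C ⊆ Finset.range (3*r-1) :=
    Finset.union_subset (Finset.union_subset h1 h2) h3
  have := Finset.card_le_card hsub
  rw [hcard, Finset.card_range] at this
  omega

set_option maxHeartbeats 1000000 in
lemma no_mono (r : ℕ) (hr : 2 ≤ r) (A B C : Finset ℕ)
    (hAr : A ⊆ Finset.range (3*r+1)) (hBr : B ⊆ Finset.range (3*r+1))
    (hCr : C ⊆ Finset.range (3*r+1))
    (hAc : A.card = r) (hBc : B.card = r) (hCc : C.card = r)
    (dAB : Disjoint A B) (dAC : Disjoint A C) (dBC : Disjoint B C)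
    (b : Bool) (hAB : kcol r A B = b) (hAC : kcol r A C = b)
    (hBC : kcol r B C = b) : False := by
  have hnotall : ¬(A ⊆ Finset.range (3*r-1) ∧ B ⊆ Finset.range (3*r-1) ∧
      C ⊆ Finset.range (3*r-1)) :=
    fun ⟨x, y, z⟩ => card_contra r hr A B C hAc hBc hCc dAB dAC dBC x y z
  have hR : ∀ D : Finset ℕ, D ⊆ Finset.range (3*r-1) → 3*r ∉ D ∧ 3*r-1 ∉ D := by
    intro D hD
    constructor <;> intro h <;> have := Finset.mem_range.mp (hD h) <;> omega
  have dAB1 : ¬(3*r ∈ A ∧ 3*r ∈ B) := fun ⟨x, y⟩ => Finset.disjoint_left.mp dAB x y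
  have dAC1 : ¬(3*r ∈ A ∧ 3*r ∈ C) := fun ⟨x, y⟩ => Finset.disjoint_left.mp dAC x y
  have dBC1 : ¬(3*r ∈ B ∧ 3*r ∈ C) := fun ⟨x, y⟩ => Finset.disjoint_left.mp dBC x y
  have dAB2 : ¬(3*r-1 ∈ A ∧ 3*r-1 ∈ B) := fun ⟨x, y⟩ => Finset.disjoint_left.mp dAB x y
  have dAC2 : ¬(3*r-1 ∈ A ∧ 3*r-1 ∈ C) := fun ⟨x, y⟩ => Finset.disjoint_left.mp dAC x y
  have dBC2 : ¬(3*r-1 ∈ B ∧ 3*r-1 ∈ C) := fun ⟨x, y⟩ => Finset.disjoint_left.mp dBC x y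
  cases b
  · -- blue triangle
    rw [kcol_false] at hAB hAC hBC
    unfold bluP at hAB hAC hBC
    rcases hAB with ⟨hA1, hB1⟩ | ⟨ha, hb1, hb2⟩ | ⟨hb, ha1, ha2⟩
    · rcases hAC with ⟨_, hC1⟩ | ⟨ha, _, _⟩ | ⟨_, ha1, _⟩
      · exact hnotall ⟨hA1, hB1, hC1⟩
      · exact (hR A hA1).1 ha
      · exact (hR A hA1).2 ha1
    · rcases hAC with ⟨hA1, _⟩ | ⟨_, hc1, _⟩ | ⟨hc1, _, _⟩
      · exact (hR A hA1).1 ha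
      · exact dBC2 ⟨hb1, hc1⟩
      · exact dAC1 ⟨ha, hc1⟩
    · rcases hBC with ⟨hB1, _⟩ | ⟨_, hc1, _⟩ | ⟨hc1, _, _⟩
      · exact (hR B hB1).1 hb
      · exact dAC2 ⟨ha1, hc1⟩
      · exact dBC1 ⟨hb, hc1⟩
  · -- red triangle
    rw [kcol_true] at hAB hAC hBC
    unfold bluP at hAB hAC hBC
    -- classify each vertex
    have cls : ∀ D : Finset ℕ, D ⊆ Finset.range (3*r+1) →
        3*r ∈ D ∨ (3*r ∉ D ∧ 3*r-1 ∈ D) ∨ D ⊆ Finset.range (3*r-1) := by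
      intro D hD
      by_cases h1 : 3*r ∈ D
      · exact Or.inl h1
      by_cases h2 : 3*r-1 ∈ D
      · exact Or.inr (Or.inl ⟨h1, h2⟩)
      · refine Or.inr (Or.inr fun x hx => ?_)
        have hx1 := Finset.mem_range.mp (hD hx)
        have hx2 : x ≠ 3*r := fun h => h1 (h ▸ hx)
        have hx3 : x ≠ 3*r-1 := fun h => h2 (h ▸ hx)
        exact Finset.mem_range.mpr (by omega)
    have nAB1 : ¬(A ⊆ Finset.range (3*r-1) ∧ B ⊆ Finset.range (3*r-1)) :=
      fun h => hAB (Or.inl h)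
    have nAB2 : ¬(3*r ∈ A ∧ 3*r-1 ∈ B ∧ 3*r ∉ B) := fun h => hAB (Or.inr (Or.inl h))
    have nAB3 : ¬(3*r ∈ B ∧ 3*r-1 ∈ A ∧ 3*r ∉ A) := fun h => hAB (Or.inr (Or.inr h))
    have nAC2 : ¬(3*r ∈ A ∧ 3*r-1 ∈ C ∧ 3*r ∉ C) := fun h => hAC (Or.inr (Or.inl h))
    have nAC3 : ¬(3*r ∈ C ∧ 3*r-1 ∈ A ∧ 3*r ∉ A) := fun h => hAC (Or.inr (Or.inr h))
    have nAC1 : ¬(A ⊆ Finset.range (3*r-1) ∧ C ⊆ Finset.range (3*r-1)) :=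
      fun h => hAC (Or.inl h)
    have nBC1 : ¬(B ⊆ Finset.range (3*r-1) ∧ C ⊆ Finset.range (3*r-1)) :=
      fun h => hBC (Or.inl h)
    have nBC2 : ¬(3*r ∈ B ∧ 3*r-1 ∈ C ∧ 3*r ∉ C) := fun h => hBC (Or.inr (Or.inl h))
    have nBC3 : ¬(3*r ∈ C ∧ 3*r-1 ∈ B ∧ 3*r ∉ B) := fun h => hBC (Or.inr (Or.inr h))
    rcases cls A hAr with haX | ⟨hanX, haY⟩ | haZ <;>
      rcases cls B hBr with hbX | ⟨hbnX, hbY⟩ | hbZ <;>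
      rcases cls C hCr with hcX | ⟨hcnX, hcY⟩ | hcZ <;>
      first
        | exact dAB1 ⟨haX, hbX⟩
        | exact dAC1 ⟨haX, hcX⟩
        | exact dBC1 ⟨hbX, hcX⟩
        | exact dAB2 ⟨haY, hbY⟩
        | exact dAC2 ⟨haY, hcY⟩
        | exact dBC2 ⟨hbY, hcY⟩
        | exact nAB1 ⟨haZ, hbZ⟩
        | exact nAC1 ⟨haZ, hcZ⟩
        | exact nBC1 ⟨hbZ, hcZ⟩
        | exact nAB2 ⟨haX, hbY, hbnX⟩
        | exact nAB3 ⟨hbX, haY, hanX⟩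
        | exact nAC2 ⟨haX, hcY, hcnX⟩
        | exact nAC3 ⟨hcX, haY, hanX⟩
        | exact nBC2 ⟨hbX, hcY, hcnX⟩
        | exact nBC3 ⟨hcX, hbY, hbnX⟩

/-- Concrete Ramsey: any symmetric 2-coloring of pairs in `{0,…,5}` has a
monochromatic triangle. -/
lemma ramsey33 (c : ℕ → ℕ → Bool) (hc : ∀ u v, c u v = c v u) :
    ∃ u v w : ℕ, u < 6 ∧ v < 6 ∧ w < 6 ∧ u ≠ v ∧ u ≠ w ∧ v ≠ w ∧
      c u v = c u w ∧ c u w = c v w := by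
  obtain ⟨b, hb⟩ : ∃ b : Bool,
      3 ≤ ((Finset.Ioo 0 6).filter (fun v => c 0 v = b)).card := by
    have hsplit := Finset.card_filter_add_card_filter_not
      (s := Finset.Ioo 0 6) (p := fun v => c 0 v = true)
    have hfe : (Finset.Ioo 0 6).filter (fun v => ¬ (c 0 v = true)) =
        (Finset.Ioo 0 6).filter (fun v => c 0 v = false) := by
      apply Finset.filter_congr; intro x _; simp
    rw [hfe, Nat.card_Ioo] at hsplit
    rcases le_or_gt 3 ((Finset.Ioo 0 6).filter (fun v => c 0 v = true)).card with h | h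
    · exact ⟨true, h⟩
    · exact ⟨false, by omega⟩
  obtain ⟨s, hs, hs3⟩ := Finset.exists_subset_card_eq hb
  obtain ⟨u, v, w, huv, huw, hvw, rfl⟩ := Finset.card_eq_three.mp hs3
  have hu := Finset.mem_filter.mp (hs (show u ∈ ({u, v, w} : Finset ℕ) by simp))
  have hv := Finset.mem_filter.mp (hs (show v ∈ ({u, v, w} : Finset ℕ) by simp))
  have hw := Finset.mem_filter.mp (hs (show w ∈ ({u, v, w} : Finset ℕ) by simp))
  have hu1 := Finset.mem_Ioo.mp hu.1
  have hv1 := Finset.mem_Ioo.mp hv.1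
  have hw1 := Finset.mem_Ioo.mp hw.1
  have hcu : c 0 u = b := hu.2
  have hcv : c 0 v = b := hv.2
  have hcw : c 0 w = b := hw.2
  by_cases h1 : c u v = b
  · exact ⟨0, u, v, by omega, by omega, by omega, by omega, by omega, huv,
      by rw [hcu, hcv], by rw [hcv, h1]⟩
  by_cases h2 : c u w = b
  · exact ⟨0, u, w, by omega, by omega, by omega, by omega, by omega, huw,
      by rw [hcu, hcw], by rw [hcw, h2]⟩
  by_cases h3 : c v w = b
  · exact ⟨0, v, w, by omega, by omega, by omega, by omega, by omega, hvw,
      by rw [hcv, hcw], by rw [hcw, h3]⟩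
  · have e1 : c u v = !b := by cases hx : c u v <;> cases b <;> simp_all
    have e2 : c u w = !b := by cases hx : c u w <;> cases b <;> simp_all
    have e3 : c v w = !b := by cases hx : c v w <;> cases b <;> simp_all
    exact ⟨u, v, w, by omega, by omega, by omega, huv, huw, hvw,
      by rw [e1, e2], by rw [e2, e3]⟩

/-- For `n = 6r` the Kneser Ramsey property holds: take 6 pairwise disjoint
blocks and apply `R(3,3) ≤ 6`. -/
lemma mem_ramsey (r : ℕ) (hr : 2 ≤ r) : KneserRamseyProp (6*r) r 3 3 := by
  intro c hc
  set blk : ℕ → Finset ℕ := fun i => (Finset.range r).image (fun x => i*r + x)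
    with hblkdef
  have hmem : ∀ i y, y ∈ blk i ↔ ∃ x, x < r ∧ i*r + x = y := by
    intro i y; simp [hblkdef]
  have hcard : ∀ i, (blk i).card = r := by
    intro i
    rw [hblkdef]
    rw [Finset.card_image_of_injective _ (fun a b h => by omega), Finset.card_range]
  have hdis : ∀ i j, i ≠ j → Disjoint (blk i) (blk j) := by
    intro i j hij
    rw [Finset.disjoint_left]
    intro y hy hy2
    rw [hmem] at hy hy2
    obtain ⟨x, hx, hxy⟩ := hy
    obtain ⟨x', hx', hxy'⟩ := hy2
    rcases lt_trichotomy i j with h | h | h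
    · have : (i+1) * r ≤ j * r := Nat.mul_le_mul_right r h
      have : i * r + r ≤ j * r := by nlinarith
      omega
    · exact hij h
    · have : (j+1) * r ≤ i * r := Nat.mul_le_mul_right r h
      have : j * r + r ≤ i * r := by nlinarith
      omega
  have hsub : ∀ i, i < 6 → blk i ⊆ Finset.range (6*r) := by
    intro i hi y hy
    rw [hmem] at hy
    obtain ⟨x, hx, rfl⟩ := hy
    have : i * r ≤ 5 * r := Nat.mul_le_mul_right r (by omega)
    exact Finset.mem_range.mpr (by omega)
  have hne : ∀ i j, i ≠ j → blk i ≠ blk j := by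
    intro i j hij heq
    have hd := hdis i j hij
    rw [heq, disjoint_self] at hd
    have := hcard j
    rw [hd] at this
    simp at this
    omega
  obtain ⟨u, v, w, hu, hv, hw, huv, huw, hvw, h1, h2⟩ :=
    ramsey33 (fun i j => c (blk i) (blk j)) (fun i j => hc _ _)
  set S : Finset (Finset ℕ) := {blk u, blk v, blk w} with hSdef
  have hSmem : ∀ A ∈ S, A = blk u ∨ A = blk v ∨ A = blk w := by
    intro A hA
    simpa [hSdef, Finset.mem_insert] using hA
  have hclique : IsKneserClique (6*r) r S := by
    constructor
    · intro A hA
      rcases hSmem A hA with rfl | rfl | rfl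
      · exact ⟨hsub u hu, hcard u⟩
      · exact ⟨hsub v hv, hcard v⟩
      · exact ⟨hsub w hw, hcard w⟩
    · intro x hx y hy hxy
      have hx' := hSmem x (Finset.mem_coe.mp hx)
      have hy' := hSmem y (Finset.mem_coe.mp hy)
      rcases hx' with rfl | rfl | rfl <;> rcases hy' with rfl | rfl | rfl <;>
        first
          | exact absurd rfl hxy
          | exact hdis _ _ (by omega)
  have hScard : S.card = 3 := by
    rw [hSdef, Finset.card_insert_of_notMem (by
        simp only [Finset.mem_insert, Finset.mem_singleton]
        push_neg
        exact ⟨hne u v huv, hne u w huw⟩),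
      Finset.card_insert_of_notMem (by
        simp only [Finset.mem_singleton]
        exact hne v w hvw),
      Finset.card_singleton]
  have hmono : MonoClique c (c (blk u) (blk v)) S := by
    intro A hA B hB hAB
    rcases hSmem A hA with rfl | rfl | rfl <;> rcases hSmem B hB with rfl | rfl | rfl
    · exact absurd rfl hAB
    · rfl
    · exact h1.symm
    · exact (hc _ _).trans rfl
    · exact absurd rfl hAB
    · exact (h2.symm.trans h1.symm)
    · exact (hc _ _).trans h1.symm
    · exact (hc _ _).trans (h2.symm.trans h1.symm)
    · exact absurd rfl hAB
  cases hb : c (blk u) (blk v)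
  · exact Or.inr ⟨S, hclique, hScard, hb ▸ hmono⟩
  · exact Or.inl ⟨S, hclique, hScard, hb ▸ hmono⟩

theorem rkg_three_three_lower (r : ℕ) (hr : 2 ≤ r) :
    3 * r + 2 ≤ RKG r 3 3 := by
  unfold RKG
  refine le_csInf ⟨6*r, mem_ramsey r hr⟩ ?_
  intro n hn
  by_contra hlt
  push_neg at hlt
  have hn1 : n ≤ 3*r + 1 := by omega
  rcases hn (kcol r) (kcol_symm r) with
      ⟨S, ⟨hS1, hS2⟩, hS3, hmono⟩ | ⟨S, ⟨hS1, hS2⟩, hS3, hmono⟩ <;>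
  · obtain ⟨A, B, C, hab, hac, hbc, rfl⟩ := Finset.card_eq_three.mp hS3
    have memA : A ∈ ({A, B, C} : Finset (Finset ℕ)) := by simp
    have memB : B ∈ ({A, B, C} : Finset (Finset ℕ)) := by simp
    have memC : C ∈ ({A, B, C} : Finset (Finset ℕ)) := by simp
    have hrng : Finset.range n ⊆ Finset.range (3*r+1) :=
      Finset.range_subset_range.mpr (by omega)
    have hA := hS1 A memA
    have hB := hS1 B memB
    have hC := hS1 C memC
    have dAB : Disjoint A B := hS2 (Finset.mem_coe.mpr memA) (Finset.mem_coe.mpr memB) hab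
    have dAC : Disjoint A C := hS2 (Finset.mem_coe.mpr memA) (Finset.mem_coe.mpr memC) hac
    have dBC : Disjoint B C := hS2 (Finset.mem_coe.mpr memB) (Finset.mem_coe.mpr memC) hbc
    exact no_mono r hr A B C (hA.1.trans hrng) (hB.1.trans hrng) (hC.1.trans hrng)
      hA.2 hB.2 hC.2 dAB dAC dBC _
      (hmono A memA B memB hab) (hmono A memA C memC hac) (hmono B memB C memC hbc)
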